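/- Let m, n ≥ 1 and let k be a field. Let D be the (m+n)-dimensional k-vector space with basis x₁, …, x_m, α₁, …, αₙ. Define linear maps Δ, Δ̃ : D → D ⊗ D by Δ(xᵢ) = Σ_{j=1}^n xᵢ ⊗ αⱼ, Δ̃(xᵢ) = Σ_{j=1}^n αⱼ ⊗ xᵢ, Δ(αⱼ) = Σ_{p=1}^n αⱼ ⊗ α_p, and Δ̃(αⱼ) = Σ_{p=1}^n α_p ⊗ αⱼ. Then (D, Δ, Δ̃) is a coassociative co-dialgebra. -/

import Mathlib

open TensorProduct

noncomputable section

variable {k V : Type*} [Field k] [AddCommGroup V] [Module k V]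

/-- `(Δ' ⊗ id) ∘ Δ` composed with the standard associator, as a map `V → V ⊗ (V ⊗ V)`. -/
def lcomp (Δ' Δ : V →ₗ[k] V ⊗[k] V) : V →ₗ[k] V ⊗[k] (V ⊗[k] V) :=
  (TensorProduct.assoc k V V V).toLinearMap ∘ₗ TensorProduct.map Δ' LinearMap.id ∘ₗ Δ

/-- `(id ⊗ Δ') ∘ Δ` as a map `V → V ⊗ (V ⊗ V)`. -/
def rcomp (Δ' Δ : V →ₗ[k] V ⊗[k] V) : V →ₗ[k] V ⊗[k] (V ⊗[k] V) :=
  TensorProduct.map LinearMap.id Δ' ∘ₗ Δ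

/-- Coassociativity of a coproduct: `(Δ ⊗ id) ∘ Δ = (id ⊗ Δ) ∘ Δ`. -/
def Coassoc (Δ : V →ₗ[k] V ⊗[k] V) : Prop := lcomp Δ Δ = rcomp Δ Δ

/-- `(D, Δ, Δ̃)` is a coassociative co-dialgebra: both coproducts are coassociative,
`(id ⊗ Δ) ∘ Δ = (id ⊗ Δ̃) ∘ Δ`, `(Δ̃ ⊗ id) ∘ Δ̃ = (Δ ⊗ id) ∘ Δ̃`, and the entanglement
equation `(Δ̃ ⊗ id) ∘ Δ = (id ⊗ Δ) ∘ Δ̃` holds. -/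
def CoDialgebra (Δ Δ' : V →ₗ[k] V ⊗[k] V) : Prop :=
  Coassoc Δ ∧ Coassoc Δ' ∧
  rcomp Δ Δ = rcomp Δ' Δ ∧
  lcomp Δ' Δ' = lcomp Δ Δ' ∧
  lcomp Δ' Δ = rcomp Δ Δ'

/-- On the `(m+n)`-dimensional space with basis `x₁, …, x_m, α₁, …, αₙ`, the
Markovian coproducts `Δ(xᵢ) = Σⱼ xᵢ ⊗ αⱼ`, `Δ̃(xᵢ) = Σⱼ αⱼ ⊗ xᵢ`, `Δ(αⱼ) = Σ_p αⱼ ⊗ α_p`,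
`Δ̃(αⱼ) = Σ_p α_p ⊗ αⱼ` make `D` a coassociative co-dialgebra. -/
theorem stmt6 (m n : ℕ) (hm : 1 ≤ m) (hn : 1 ≤ n)
    (k D : Type*) [Field k] [AddCommGroup D] [Module k D]
    (b : Module.Basis (Fin m ⊕ Fin n) k D)
    (Δ Δ' : D →ₗ[k] D ⊗[k] D)
    (hΔx : ∀ i : Fin m, Δ (b (Sum.inl i)) = ∑ j : Fin n, b (Sum.inl i) ⊗ₜ[k] b (Sum.inr j))
    (hΔ'x : ∀ i : Fin m, Δ' (b (Sum.inl i)) = ∑ j : Fin n, b (Sum.inr j) ⊗ₜ[k] b (Sum.inl i))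
    (hΔα : ∀ j : Fin n, Δ (b (Sum.inr j)) = ∑ p : Fin n, b (Sum.inr j) ⊗ₜ[k] b (Sum.inr p))
    (hΔ'α : ∀ j : Fin n, Δ' (b (Sum.inr j)) = ∑ p : Fin n, b (Sum.inr p) ⊗ₜ[k] b (Sum.inr j)) :
    CoDialgebra Δ Δ' := by
  refine ⟨?_, ?_, ?_, ?_, ?_⟩ <;>
  · first | skip | unfold Coassoc
    apply b.ext
    rintro (i | j) <;>
    · simp only [lcomp, rcomp, LinearMap.comp_apply, hΔx, hΔ'x, hΔα, hΔ'α, map_sum,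
        TensorProduct.map_tmul, LinearMap.id_coe, id_eq, LinearEquiv.coe_coe,
        TensorProduct.assoc_tmul, TensorProduct.sum_tmul, TensorProduct.tmul_sum]
      first
        | rfl
        | exact Finset.sum_comm ..
        | exact (Finset.sum_comm ..).symm
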